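/- Let q be a positive definite quadratic form on R^2 and T a triangle. If σ_q(ψ_q³(T)) ≥ 5, then σ_q(ψ_q³(T)) ≤ 0.69·σ_q(T), where ψ_q³ denotes three iterations of the map ψ_q. -/

import Mathlib

open Matrix

/-- A triangle recorded through its edge vectors and its area. -/
structure Tri where
  e1 : Fin 2 → ℝ
  e2 : Fin 2 → ℝ
  e3 : Fin 2 → ℝ
  area : ℝ

/-- The data of `T` really comes from a nondegenerate triangle: the edge
vectors sum to zero and the area is the actual (positive) area. -/
def IsTri (T : Tri) : Prop :=
  T.e1 + T.e2 + T.e3 = 0 ∧ T.area = |T.e1 0 * T.e2 1 - T.e1 1 * T.e2 0| / 2 ∧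
    0 < T.area

/-- The quadratic form `v ↦ ⟨Qv, v⟩`. -/
noncomputable def qVal (Q : Matrix (Fin 2) (Fin 2) ℝ) (v : Fin 2 → ℝ) : ℝ :=
  Q.mulVec v ⬝ᵥ v

/-- The non-degeneracy measure `σ_q(T)`: the sum of the two smallest of the
`q`-squared-lengths of the edges, divided by `4|T|√(det Q)`. -/
noncomputable def sigmaQ (Q : Matrix (Fin 2) (Fin 2) ℝ) (T : Tri) : ℝ :=
  (qVal Q T.e1 + qVal Q T.e2 + qVal Q T.e3 -
      max (max (qVal Q T.e1) (qVal Q T.e2)) (qVal Q T.e3)) /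
    (4 * T.area * Real.sqrt Q.det)

/-- `S = ψ_q(T)`: `S` is the child of the bisection of a `q`-longest edge of
`T` containing a `q`-shortest edge; if the edges of `T` are `a, b, c` with
`q(a) ≥ q(b) ≥ q(c)`, then `S` has edges `c, a/2, (b−c)/2` and area `|T|/2`. -/
def PsiChild (Q : Matrix (Fin 2) (Fin 2) ℝ) (T S : Tri) : Prop :=
  ∃ a b c : Fin 2 → ℝ,
    ({T.e1, T.e2, T.e3} : Multiset (Fin 2 → ℝ)) = {a, b, c} ∧
    qVal Q b ≤ qVal Q a ∧ qVal Q c ≤ qVal Q b ∧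
    S.area = T.area / 2 ∧
    ({S.e1, S.e2, S.e3} : Multiset (Fin 2 → ℝ)) =
      {c, (1 / 2 : ℝ) • a, (1 / 2 : ℝ) • (b - c)}

namespace Stmt12Aux

lemma perm2 {α : Type*} {x y a b : α} (h : ({x, y} : Multiset α) = {a, b}) :
    (x = a ∧ y = b) ∨ (x = b ∧ y = a) := by
  have hx : x ∈ ({a, b} : Multiset α) := h ▸ (by simp)
  simp only [Multiset.insert_eq_cons, Multiset.mem_cons, Multiset.mem_singleton] at hx
  rcases hx with hx | hx
  · subst hx
    left
    refine ⟨rfl, ?_⟩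
    have h' : ({y} : Multiset α) = {b} := by
      have := (Multiset.cons_inj_right (s := ({y} : Multiset α)) (t := ({b} : Multiset α)) x).mp
      simpa using this (by simpa [Multiset.insert_eq_cons] using h)
    simpa using h'
  · subst hx
    right
    refine ⟨rfl, ?_⟩
    have hswap : ({a, x} : Multiset α) = ({x, a} : Multiset α) := by
      simp only [Multiset.insert_eq_cons, ← Multiset.cons_zero]
      rw [Multiset.cons_swap]
    rw [hswap] at h
    have h' : ({y} : Multiset α) = {a} := by
      have := (Multiset.cons_inj_right (s := ({y} : Multiset α)) (t := ({a} : Multiset α)) x).mp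
      simpa using this (by simpa [Multiset.insert_eq_cons] using h)
    simpa using h'

lemma perm3 {α : Type*} {x y z a b c : α} (h : ({x, y, z} : Multiset α) = {a, b, c}) :
    (x = a ∧ y = b ∧ z = c) ∨ (x = a ∧ y = c ∧ z = b) ∨ (x = b ∧ y = a ∧ z = c) ∨
    (x = b ∧ y = c ∧ z = a) ∨ (x = c ∧ y = a ∧ z = b) ∨ (x = c ∧ y = b ∧ z = a) := by
  have hx : x ∈ ({a, b, c} : Multiset α) := h ▸ (by simp)
  simp only [Multiset.insert_eq_cons, Multiset.mem_cons, Multiset.mem_singleton] at hx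
  have key : ∀ (u v w : α), ({x, y, z} : Multiset α) = {u, v, w} → x = u →
      ({y, z} : Multiset α) = {v, w} := by
    intro u v w hh hxu
    subst hxu
    have := (Multiset.cons_inj_right (s := ({y, z} : Multiset α))
      (t := ({v, w} : Multiset α)) x).mp
    simpa using this (by simpa [Multiset.insert_eq_cons] using hh)
  rcases hx with hx | hx | hx
  · have h' := key a b c h hx
    rcases perm2 h' with ⟨h1, h2⟩ | ⟨h1, h2⟩
    · exact Or.inl ⟨hx, h1, h2⟩
    · exact Or.inr (Or.inl ⟨hx, h1, h2⟩)
  · have hswap : ({a, b, c} : Multiset α) = ({b, a, c} : Multiset α) := by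
      simp only [Multiset.insert_eq_cons, ← Multiset.cons_zero]
      rw [Multiset.cons_swap]
    have h' := key b a c (h.trans hswap) hx
    rcases perm2 h' with ⟨h1, h2⟩ | ⟨h1, h2⟩
    · exact Or.inr (Or.inr (Or.inl ⟨hx, h1, h2⟩))
    · exact Or.inr (Or.inr (Or.inr (Or.inl ⟨hx, h1, h2⟩)))
  · have hswap : ({a, b, c} : Multiset α) = ({c, a, b} : Multiset α) := by
      simp only [Multiset.insert_eq_cons, ← Multiset.cons_zero]
      rw [Multiset.cons_swap b c, Multiset.cons_swap a c]
    have h' := key c a b (h.trans hswap) hx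
    rcases perm2 h' with ⟨h1, h2⟩ | ⟨h1, h2⟩
    · exact Or.inr (Or.inr (Or.inr (Or.inr (Or.inl ⟨hx, h1, h2⟩))))
    · exact Or.inr (Or.inr (Or.inr (Or.inr (Or.inr ⟨hx, h1, h2⟩))))

lemma qVal_expand (Q : Matrix (Fin 2) (Fin 2) ℝ) (v : Fin 2 → ℝ) :
    qVal Q v = Q 0 0 * v 0 * v 0 + Q 0 1 * v 1 * v 0 + Q 1 0 * v 0 * v 1 + Q 1 1 * v 1 * v 1 := by
  simp [qVal, Matrix.mulVec, dotProduct, Fin.sum_univ_two, Matrix.vecHead, Matrix.vecTail]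
  ring

lemma qVal_nonneg {Q : Matrix (Fin 2) (Fin 2) ℝ} (hQ : Q.PosDef) (v : Fin 2 → ℝ) :
    0 ≤ qVal Q v := by
  have h := hQ.posSemidef.dotProduct_mulVec_nonneg v
  simpa [qVal, dotProduct_comm] using h

lemma heron_id (Q : Matrix (Fin 2) (Fin 2) ℝ) (hsym : Q 1 0 = Q 0 1) (u v : Fin 2 → ℝ) :
    2 * qVal Q u * qVal Q v + 2 * qVal Q v * qVal Q (-u - v) + 2 * qVal Q (-u - v) * qVal Q u
      - (qVal Q u) ^ 2 - (qVal Q v) ^ 2 - (qVal Q (-u - v)) ^ 2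
      = 4 * Q.det * (u 0 * v 1 - u 1 * v 0) ^ 2 := by
  rw [Matrix.det_fin_two]
  simp only [qVal_expand, Pi.sub_apply, Pi.neg_apply, hsym]
  ring

lemma qVal_half (Q : Matrix (Fin 2) (Fin 2) ℝ) (a : Fin 2 → ℝ) :
    qVal Q ((1 / 2 : ℝ) • a) = qVal Q a / 4 := by
  simp only [qVal_expand, Pi.smul_apply, smul_eq_mul]; ring

lemma qVal_half_sub (Q : Matrix (Fin 2) (Fin 2) ℝ) (hsym : Q 1 0 = Q 0 1) {a b c : Fin 2 → ℝ}
    (h : a + b + c = 0) :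
    qVal Q ((1 / 2 : ℝ) • (b - c)) = (2 * qVal Q b + 2 * qVal Q c - qVal Q a) / 4 := by
  have h0 : a 0 = - b 0 - c 0 := by have := congrFun h 0; simp at this; linarith
  have h1 : a 1 = - b 1 - c 1 := by have := congrFun h 1; simp at this; linarith
  simp only [qVal_expand, Pi.smul_apply, smul_eq_mul, Pi.sub_apply, h0, h1, hsym]
  ring

lemma cross_perm {u v w x y z : Fin 2 → ℝ} (hsum : u + v + w = 0)
    (h : ({x, y, z} : Multiset (Fin 2 → ℝ)) = {u, v, w}) :
    (x 0 * y 1 - x 1 * y 0) ^ 2 = (u 0 * v 1 - u 1 * v 0) ^ 2 := by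
  have hw0 : w 0 = -u 0 - v 0 := by have := congrFun hsum 0; simp at this; linarith
  have hw1 : w 1 = -u 1 - v 1 := by have := congrFun hsum 1; simp at this; linarith
  rcases perm3 h with ⟨h1, h2, _⟩ | ⟨h1, h2, _⟩ | ⟨h1, h2, _⟩ | ⟨h1, h2, _⟩ |
    ⟨h1, h2, _⟩ | ⟨h1, h2, _⟩ <;>
    simp only [h1, h2, hw0, hw1] <;> ring

lemma abs_eq_of_sq_eq {x y : ℝ} (h : x ^ 2 = y ^ 2) : |x| = |y| := by
  apply abs_eq_abs.mpr
  have h2 : (x - y) * (x + y) = 0 := by linear_combination h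
  rcases mul_eq_zero.mp h2 with h3 | h3
  · exact Or.inl (sub_eq_zero.mp h3)
  · exact Or.inr (eq_neg_of_add_eq_zero_left h3)

lemma sorted_max {A B C : ℝ} (hCB : C ≤ B) (hBA : B ≤ A) {x y z : ℝ}
    (h : ({x, y, z} : Multiset ℝ) = {A, B, C}) :
    max (max x y) z = A ∧ x + y + z = A + B + C := by
  have hCA : C ≤ A := hCB.trans hBA
  rcases perm3 h with ⟨rfl, rfl, rfl⟩ | ⟨rfl, rfl, rfl⟩ | ⟨rfl, rfl, rfl⟩ | ⟨rfl, rfl, rfl⟩ |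
    ⟨rfl, rfl, rfl⟩ | ⟨rfl, rfl, rfl⟩
  · exact ⟨by rw [max_eq_left hBA, max_eq_left hCA], by ring⟩
  · exact ⟨by rw [max_eq_left hCA, max_eq_left hBA], by ring⟩
  · exact ⟨by rw [max_eq_right hBA, max_eq_left hCA], by ring⟩
  · exact ⟨by rw [max_eq_left hCB, max_eq_right hBA], by ring⟩
  · exact ⟨by rw [max_eq_right hCA, max_eq_left hBA], by ring⟩
  · exact ⟨by rw [max_eq_right hCB, max_eq_right hBA], by ring⟩

/-- The degeneracy measure `ρ_q(T) = q(a)/(|T|√det Q)`. -/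
noncomputable def rhoQ (Q : Matrix (Fin 2) (Fin 2) ℝ) (T : Tri) : ℝ :=
  max (max (qVal Q T.e1) (qVal Q T.e2)) (qVal Q T.e3) / (T.area * Real.sqrt Q.det)

lemma heron_of_isTri {Q : Matrix (Fin 2) (Fin 2) ℝ} (hQ : Q.PosDef) {T : Tri} (hT : IsTri T) :
    2 * qVal Q T.e1 * qVal Q T.e2 + 2 * qVal Q T.e2 * qVal Q T.e3 +
      2 * qVal Q T.e3 * qVal Q T.e1 - (qVal Q T.e1) ^ 2 - (qVal Q T.e2) ^ 2 -
      (qVal Q T.e3) ^ 2 = 16 * (T.area * Real.sqrt Q.det) ^ 2 := by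
  obtain ⟨hsum, harea, hm⟩ := hT
  have hsym : Q 1 0 = Q 0 1 := by
    have := congrFun (congrFun hQ.1 0) 1
    simpa [Matrix.conjTranspose_apply] using this
  have he3 : T.e3 = -T.e1 - T.e2 := by
    funext i
    have := congrFun hsum i
    simp only [Pi.add_apply, Pi.zero_apply] at this
    simp only [Pi.sub_apply, Pi.neg_apply]
    linarith
  have hid := heron_id Q hsym T.e1 T.e2
  rw [← he3] at hid
  rw [hid]
  have hd : (Real.sqrt Q.det) ^ 2 = Q.det := Real.sq_sqrt hQ.det_pos.le
  rw [mul_pow, hd, harea]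
  rw [div_pow, sq_abs]
  ring

lemma div_helper1 {N M P : ℝ} (hP : 0 < P) (h : N ≤ 2 * M) :
    2 * (N / (4 * P)) ≤ M / P := by
  rw [show 2 * (N / (4 * P)) = N / 2 * (1 / P) by ring, show M / P = M * (1 / P) by ring]
  exact mul_le_mul_of_nonneg_right (by linarith) (by positivity)

lemma div_helper2 {N M P : ℝ} (hP : 0 < P) (h : M ≤ 2 * N) :
    M / P ≤ 8 * (N / (4 * P)) := by
  rw [show 8 * (N / (4 * P)) = 2 * N * (1 / P) by ring, show M / P = M * (1 / P) by ring]
  exact mul_le_mul_of_nonneg_right (by linarith) (by positivity)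

lemma div_helper3 {X Y P : ℝ} (hP : 0 < P) (h : 2 * X ≤ Y) :
    X / (2 * P) ≤ Y / (4 * P) := by
  rw [show X / (2 * P) = X / 2 * (1 / P) by ring, show Y / (4 * P) = Y / 4 * (1 / P) by ring]
  exact mul_le_mul_of_nonneg_right (by linarith) (by positivity)

lemma rho_helper {MS A P : ℝ} (hP : 0 < P) (hA : 0 < A) (h : MS * A ≤ A ^ 2 / 4 + 4 * P ^ 2) :
    2 * MS / P ≤ A / P / 2 + 8 / (A / P) := by
  have h8 : A / P / 2 + 8 / (A / P) = (A ^ 2 + 16 * P ^ 2) / (2 * A * P) := by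
    field_simp
    ring
  rw [h8, div_le_div_iff₀ hP (by positivity)]
  nlinarith [mul_le_mul_of_nonneg_right h hP.le]

set_option maxHeartbeats 1000000 in
lemma basic {Q : Matrix (Fin 2) (Fin 2) ℝ} (hQ : Q.PosDef) {T : Tri} (hT : IsTri T) :
    2 * sigmaQ Q T ≤ rhoQ Q T ∧ rhoQ Q T ≤ 8 * sigmaQ Q T := by
  obtain ⟨hsum, harea, hm⟩ := hT
  have hd : 0 < Real.sqrt Q.det := Real.sqrt_pos.mpr hQ.det_pos
  obtain ⟨P, hPe⟩ : ∃ t : ℝ, t = T.area * Real.sqrt Q.det := ⟨_, rfl⟩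
  have hP : 0 < P := by rw [hPe]; exact mul_pos hm hd
  obtain ⟨x, hx⟩ : ∃ t : ℝ, t = qVal Q T.e1 := ⟨_, rfl⟩
  obtain ⟨y, hy⟩ : ∃ t : ℝ, t = qVal Q T.e2 := ⟨_, rfl⟩
  obtain ⟨z, hz⟩ : ∃ t : ℝ, t = qVal Q T.e3 := ⟨_, rfl⟩
  have hx0 : 0 ≤ x := by rw [hx]; exact qVal_nonneg hQ _
  have hy0 : 0 ≤ y := by rw [hy]; exact qVal_nonneg hQ _
  have hz0 : 0 ≤ z := by rw [hz]; exact qVal_nonneg hQ _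
  have hH : 2 * x * y + 2 * y * z + 2 * z * x - x ^ 2 - y ^ 2 - z ^ 2 = 16 * P ^ 2 := by
    rw [hx, hy, hz, hPe]; exact heron_of_isTri hQ ⟨hsum, harea, hm⟩
  obtain ⟨M, hM⟩ : ∃ t : ℝ, t = max (max x y) z := ⟨_, rfl⟩
  have hxM : x ≤ M := by rw [hM]; exact le_trans (le_max_left _ _) (le_max_left _ _)
  have hyM : y ≤ M := by rw [hM]; exact le_trans (le_max_right _ _) (le_max_left _ _)
  have hzM : z ≤ M := by rw [hM]; exact le_max_right _ _
  have hMcases : M = x ∨ M = y ∨ M = z := by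
    rw [hM]
    rcases max_choice (max x y) z with h | h
    · rcases max_choice x y with h' | h'
      · exact Or.inl (h.trans h')
      · exact Or.inr (Or.inl (h.trans h'))
    · exact Or.inr (Or.inr h)
  have hσ : sigmaQ Q T = (x + y + z - M) / (4 * P) := by
    rw [sigmaQ, hM, hx, hy, hz, hPe]; ring
  have hρ : rhoQ Q T = M / P := by
    rw [rhoQ, hM, hx, hy, hz, hPe]
  constructor
  · rw [hσ, hρ]
    exact div_helper1 hP (by linarith)
  · rw [hσ, hρ]
    refine div_helper2 hP ?_
    rcases hMcases with h | h | h <;> rw [h] <;>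
      nlinarith [mul_pos hP hP, sq_nonneg (x - y), sq_nonneg (y - z), sq_nonneg (x - z)]

set_option maxHeartbeats 1000000 in
lemma step {Q : Matrix (Fin 2) (Fin 2) ℝ} (hQ : Q.PosDef) {T S : Tri} (hT : IsTri T)
    (h : PsiChild Q T S) :
    IsTri S ∧ sigmaQ Q S ≤ sigmaQ Q T ∧ rhoQ Q S ≤ rhoQ Q T / 2 + 8 / rhoQ Q T := by
  obtain ⟨a, b, c, hmT, hba0, hcb0, hSa, hmS⟩ := h
  obtain ⟨hsum, harea, hm⟩ := hT
  have hsym : Q 1 0 = Q 0 1 := by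
    have := congrFun (congrFun hQ.1 0) 1
    simpa [Matrix.conjTranspose_apply] using this
  have hd : 0 < Real.sqrt Q.det := Real.sqrt_pos.mpr hQ.det_pos
  obtain ⟨P, hPe⟩ : ∃ t : ℝ, t = T.area * Real.sqrt Q.det := ⟨_, rfl⟩
  have hP : 0 < P := by rw [hPe]; exact mul_pos hm hd
  -- edge vector sum of T in terms of a, b, c
  have hsT : T.e1 + T.e2 + T.e3 = a + b + c := by
    have := congrArg Multiset.sum hmT
    simpa [Multiset.insert_eq_cons, add_assoc] using this
  have habc : a + b + c = 0 := by rw [← hsT, hsum]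
  obtain ⟨A, hA⟩ : ∃ t : ℝ, t = qVal Q a := ⟨_, rfl⟩
  obtain ⟨B, hB⟩ : ∃ t : ℝ, t = qVal Q b := ⟨_, rfl⟩
  obtain ⟨C, hC⟩ : ∃ t : ℝ, t = qVal Q c := ⟨_, rfl⟩
  have hba : B ≤ A := by rw [hA, hB]; exact hba0
  have hcb : C ≤ B := by rw [hB, hC]; exact hcb0
  have hqT : ({qVal Q T.e1, qVal Q T.e2, qVal Q T.e3} : Multiset ℝ) = {A, B, C} := by
    rw [hA, hB, hC]
    have := congrArg (Multiset.map (qVal Q)) hmT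
    simpa [Multiset.insert_eq_cons] using this
  obtain ⟨hmaxT, hsumT⟩ := sorted_max hcb hba hqT
  have h0 := heron_of_isTri hQ ⟨hsum, harea, hm⟩
  rw [← hPe] at h0
  have hH : 2 * A * B + 2 * B * C + 2 * C * A - A ^ 2 - B ^ 2 - C ^ 2 = 16 * P ^ 2 := by
    rcases perm3 hqT with ⟨h1, h2, h3⟩ | ⟨h1, h2, h3⟩ | ⟨h1, h2, h3⟩ | ⟨h1, h2, h3⟩ |
      ⟨h1, h2, h3⟩ | ⟨h1, h2, h3⟩ <;> rw [h1, h2, h3] at h0 <;> linear_combination h0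
  have hA0' : 0 ≤ A := by rw [hA]; exact qVal_nonneg hQ _
  have hB0' : 0 ≤ B := by rw [hB]; exact qVal_nonneg hQ _
  have hC0 : 0 < C := by
    nlinarith [mul_pos hP hP, sq_nonneg (A - B), hA0', hB0']
  have hB0 : 0 < B := lt_of_lt_of_le hC0 hcb
  have hA0 : 0 < A := lt_of_lt_of_le hB0 hba
  -- child q-values
  obtain ⟨W, hW⟩ : ∃ t : ℝ, t = (2 * B + 2 * C - A) / 4 := ⟨_, rfl⟩
  have hqS : ({qVal Q S.e1, qVal Q S.e2, qVal Q S.e3} : Multiset ℝ) = {C, A / 4, W} := by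
    rw [hW, hA, hB, hC]
    have := congrArg (Multiset.map (qVal Q)) hmS
    simp only [Multiset.insert_eq_cons, Multiset.map_cons, Multiset.map_singleton] at this
    rw [qVal_half, qVal_half_sub Q hsym habc] at this
    simpa [Multiset.insert_eq_cons] using this
  have hsumS : qVal Q S.e1 + qVal Q S.e2 + qVal Q S.e3 = C + A / 4 + W := by
    have := congrArg Multiset.sum hqS
    simpa [Multiset.insert_eq_cons, add_assoc] using this
  obtain ⟨MS, hMS⟩ : ∃ t : ℝ,
      t = max (max (qVal Q S.e1) (qVal Q S.e2)) (qVal Q S.e3) := ⟨_, rfl⟩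
  have hCMS : C ≤ MS := by
    have hmem : C ∈ ({qVal Q S.e1, qVal Q S.e2, qVal Q S.e3} : Multiset ℝ) := by
      rw [hqS]; simp
    simp only [Multiset.insert_eq_cons, Multiset.mem_cons, Multiset.mem_singleton] at hmem
    rw [hMS]
    rcases hmem with h' | h' | h' <;> rw [h']
    · exact le_trans (le_max_left _ _) (le_max_left _ _)
    · exact le_trans (le_max_right _ _) (le_max_left _ _)
    · exact le_max_right _ _
  have hbound : ∀ t : ℝ, t = C ∨ t = A / 4 ∨ t = W → t * A ≤ A ^ 2 / 4 + 4 * P ^ 2 := by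
    intro t ht
    rcases ht with h' | h' | h'  <;> rw [h']
    · nlinarith [mul_nonneg (show (0:ℝ) ≤ B - C by linarith)
        (show (0:ℝ) ≤ 2 * A + C - B by linarith)]
    · nlinarith [mul_pos hP hP]
    · rw [hW]
      nlinarith [mul_nonneg (show (0:ℝ) ≤ B - C by linarith)
        (show (0:ℝ) ≤ A + B - C by linarith),
        mul_nonneg (show (0:ℝ) ≤ A - B + C by linarith)
        (show (0:ℝ) ≤ A + B - C by linarith)]
  have hkeyA : MS * A ≤ A ^ 2 / 4 + 4 * P ^ 2 := by
    have hmem : ∀ u : ℝ, u ∈ ({qVal Q S.e1, qVal Q S.e2, qVal Q S.e3} : Multiset ℝ) →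
        u * A ≤ A ^ 2 / 4 + 4 * P ^ 2 := by
      intro u hu
      rw [hqS] at hu
      simp only [Multiset.insert_eq_cons, Multiset.mem_cons, Multiset.mem_singleton] at hu
      exact hbound u hu
    rw [hMS]
    rcases max_cases (max (qVal Q S.e1) (qVal Q S.e2)) (qVal Q S.e3) with ⟨he, _⟩ | ⟨he, _⟩
    · rw [he]
      rcases max_cases (qVal Q S.e1) (qVal Q S.e2) with ⟨he2, _⟩ | ⟨he2, _⟩ <;> rw [he2]
      · exact hmem _ (by simp)
      · exact hmem _ (by simp)
    · rw [he]; exact hmem _ (by simp)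
  -- IsTri S
  have hchildsum : c + (1 / 2 : ℝ) • a + (1 / 2 : ℝ) • (b - c) = 0 := by
    funext i
    have := congrFun habc i
    simp only [Pi.add_apply, Pi.zero_apply] at this
    simp only [Pi.add_apply, Pi.smul_apply, Pi.sub_apply, Pi.zero_apply, smul_eq_mul]
    linarith
  have hsumS0 : S.e1 + S.e2 + S.e3 = 0 := by
    have hs : S.e1 + S.e2 + S.e3 = c + (1 / 2 : ℝ) • a + (1 / 2 : ℝ) • (b - c) := by
      have := congrArg Multiset.sum hmS
      simpa [Multiset.insert_eq_cons, add_assoc] using this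
    rw [hs, hchildsum]
  have hc0 : c 0 = -a 0 - b 0 := by have := congrFun habc 0; simp at this; linarith
  have hc1 : c 1 = -a 1 - b 1 := by have := congrFun habc 1; simp at this; linarith
  have hcrossS2 : (S.e1 0 * S.e2 1 - S.e1 1 * S.e2 0) ^ 2 =
      ((T.e1 0 * T.e2 1 - T.e1 1 * T.e2 0) / 2) ^ 2 := by
    have h1 := cross_perm hchildsum hmS
    have h2 := cross_perm habc hmT
    rw [h1, div_pow, h2]
    simp only [Pi.smul_apply, smul_eq_mul, hc0, hc1]
    ring
  have hSarea : S.area = |S.e1 0 * S.e2 1 - S.e1 1 * S.e2 0| / 2 := by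
    have habsS := abs_eq_of_sq_eq hcrossS2
    rw [abs_div] at habsS
    rw [hSa, harea, habsS]
    norm_num
  have hSpos : 0 < S.area := by rw [hSa]; linarith
  -- formulas for sigma and rho
  have hσT : sigmaQ Q T = (B + C) / (4 * P) := by
    rw [sigmaQ, hmaxT, hsumT, hPe]; ring
  have hρT : rhoQ Q T = A / P := by rw [rhoQ, hmaxT, hPe]
  have hσS : sigmaQ Q S = (C + A / 4 + W - MS) / (2 * P) := by
    rw [sigmaQ, hsumS, ← hMS, hSa, hPe]
    have hane : T.area ≠ 0 := ne_of_gt hm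
    have hdne : Real.sqrt Q.det ≠ 0 := ne_of_gt hd
    field_simp
    ring
  have hρS : rhoQ Q S = 2 * MS / P := by
    rw [rhoQ, ← hMS, hSa, hPe]
    have hane : T.area ≠ 0 := ne_of_gt hm
    have hdne : Real.sqrt Q.det ≠ 0 := ne_of_gt hd
    field_simp
  refine ⟨⟨hsumS0, hSarea, hSpos⟩, ?_, ?_⟩
  · rw [hσS, hσT]
    refine div_helper3 hP ?_
    rw [hW]
    linarith
  · rw [hρS, hρT]
    exact rho_helper hP hA0 hkeyA

end Stmt12Aux

open Stmt12Aux in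
/-- if `σ_q(ψ_q³(T)) ≥ 5` then `σ_q(ψ_q³(T)) ≤ 0.69·σ_q(T)`. -/
theorem stmt12 (Q : Matrix (Fin 2) (Fin 2) ℝ) (hQ : Q.PosDef)
    (T T1 T2 T3 : Tri) (hT : IsTri T)
    (h1 : PsiChild Q T T1) (h2 : PsiChild Q T1 T2) (h3 : PsiChild Q T2 T3)
    (h5 : 5 ≤ sigmaQ Q T3) : sigmaQ Q T3 ≤ 0.69 * sigmaQ Q T := by
  obtain ⟨hT1, hs1, hr1⟩ := step hQ hT h1
  obtain ⟨hT2, hs2, hr2⟩ := step hQ hT1 h2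
  obtain ⟨hT3, hs3, hr3⟩ := step hQ hT2 h3
  obtain ⟨hb0a, hb0b⟩ := basic hQ hT
  obtain ⟨hb1a, hb1b⟩ := basic hQ hT1
  obtain ⟨hb2a, hb2b⟩ := basic hQ hT2
  obtain ⟨hb3a, hb3b⟩ := basic hQ hT3
  have hs2_5 : 5 ≤ sigmaQ Q T2 := le_trans (le_trans h5 hs3) (le_refl _)
  have hs1_5 : 5 ≤ sigmaQ Q T1 := le_trans hs2_5 hs2
  have hs0_5 : 5 ≤ sigmaQ Q T := le_trans hs1_5 hs1
  have hr0_10 : 10 ≤ rhoQ Q T := by linarith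
  have hr1_10 : 10 ≤ rhoQ Q T1 := by linarith
  have hr2_10 : 10 ≤ rhoQ Q T2 := by linarith
  have h80 : 8 / rhoQ Q T ≤ 4 / 5 := by rw [div_le_iff₀ (by linarith)]; linarith
  have h81 : 8 / rhoQ Q T1 ≤ 4 / 5 := by rw [div_le_iff₀ (by linarith)]; linarith
  have h82 : 8 / rhoQ Q T2 ≤ 4 / 5 := by rw [div_le_iff₀ (by linarith)]; linarith
  have hA1 : 2 * rhoQ Q T2 - 8 / 5 ≤ rhoQ Q T1 := by linarith
  have hA0 : 2 * rhoQ Q T1 - 8 / 5 ≤ rhoQ Q T := by linarith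
  have hs3ub : sigmaQ Q T3 ≤ rhoQ Q T2 / 4 + 2 / 5 := by linarith
  have hs0lb : rhoQ Q T2 / 2 - 3 / 5 ≤ sigmaQ Q T := by linarith
  have h069 : (0.69 : ℝ) = 69 / 100 := by norm_num
  rw [h069]
  linarith
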